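/- arXiv:2102.08903 — 2 statements merged into one kernel-verified Lean document; each statement's English description precedes it below -/
import Mathlib

section
/- (NPG regret lemma for zero-sum games.) Fix π1, assume log π_θ(b|s) is β-smooth in θ for each (s,b), and run updates θ^{t+1} = θ^t − η w^t with ‖w^t‖ ≤ W. Let π2^* be the best response to π1 and define err_t = E_{s∼d_σ^{π1,π2^*}} E_{a∼π1} E_{b∼π2^*} [ A^{π1,π2^t}(s,a,b) − (w^t)^⊤ ∇_θ log π2^t(b|s) ]. Then (1/T) Σ_{t=0}^{T−1} ( V^{π1,π2^t}(σ) − V^{π1,π2^*}(σ) ) ≤ (1/(1−γ)) ( log|A| / (ηT) + η β W² / 2 − (1/T) Σ_{t=0}^{T−1} err_t ). -/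
open Finset intervalIntegral

lemma stmt11_descent {dp : ℕ} (β : ℝ) (hβ : 0 ≤ β) (f : EuclideanSpace ℝ (Fin dp) → ℝ)
    (hf : Differentiable ℝ f)
    (hL : LipschitzWith (Real.toNNReal β) (fun y => gradient f y))
    (x u : EuclideanSpace ℝ (Fin dp)) :
    f x + (inner ℝ (gradient f x) u : ℝ) - β / 2 * ‖u‖ ^ 2 ≤ f (x + u) := by
  have hg : ∀ t : ℝ, HasDerivAt (fun t : ℝ => f (x + t • u))
      ((inner ℝ (gradient f (x + t • u)) u : ℝ)) t := by
    intro t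
    have hline : HasDerivAt (fun t : ℝ => x + t • u) u t := by
      simpa using ((hasDerivAt_id t).smul_const u).const_add x
    have hF : HasFDerivAt f ((InnerProductSpace.toDual ℝ _) (gradient f (x + t • u)))
        (x + t • u) := (hf _).hasGradientAt.hasFDerivAt
    have h := hF.comp_hasDerivAt t hline
    rw [InnerProductSpace.toDual_apply_apply] at h
    exact h
  have hcont : Continuous fun t : ℝ => (inner ℝ (gradient f (x + t • u)) u : ℝ) := by
    exact (hL.continuous.comp (continuous_const.add (continuous_id.smul continuous_const))).inner continuous_const
  have hint : IntervalIntegrable (fun t : ℝ => (inner ℝ (gradient f (x + t • u)) u : ℝ))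
      MeasureTheory.volume 0 1 := hcont.intervalIntegrable 0 1
  have heq : f (x + u) - f x = ∫ t in (0:ℝ)..1, (inner ℝ (gradient f (x + t • u)) u : ℝ) := by
    have h := intervalIntegral.integral_eq_sub_of_hasDerivAt
      (f := fun t : ℝ => f (x + t • u)) (f' := fun t : ℝ => (inner ℝ (gradient f (x + t • u)) u : ℝ))
      (fun t _ => hg t) hint
    simpa using h.symm
  have hc : ∀ t ∈ Set.Icc (0:ℝ) 1,
      (inner ℝ (gradient f x) u : ℝ) - β * ‖u‖ ^ 2 * t ≤ (inner ℝ (gradient f (x + t • u)) u : ℝ) := by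
    intro t ht
    have h1 : ‖gradient f (x + t • u) - gradient f x‖ ≤ β * (t * ‖u‖) := by
      have h := hL.dist_le_mul (x + t • u) x
      rw [dist_eq_norm, dist_eq_norm] at h
      have : x + t • u - x = t • u := by abel
      rw [this, norm_smul] at h
      calc ‖gradient f (x + t • u) - gradient f x‖ ≤ (Real.toNNReal β : ℝ) * (‖t‖ * ‖u‖) := h
        _ = β * (t * ‖u‖) := by
            rw [Real.coe_toNNReal β hβ, Real.norm_eq_abs, abs_of_nonneg ht.1]
    have h2 := abs_real_inner_le_norm (gradient f (x + t • u) - gradient f x) u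
    rw [inner_sub_left] at h2
    have h3 : -(‖gradient f (x + t • u) - gradient f x‖ * ‖u‖)
        ≤ (inner ℝ (gradient f (x + t • u)) u : ℝ) - (inner ℝ (gradient f x) u : ℝ) :=
      neg_le_of_abs_le h2 |>.trans_eq' rfl
    nlinarith [norm_nonneg u, norm_nonneg (gradient f (x + t • u) - gradient f x), ht.1]
  have hlin : IntervalIntegrable
      (fun t : ℝ => (inner ℝ (gradient f x) u : ℝ) - β * ‖u‖ ^ 2 * t) MeasureTheory.volume 0 1 :=
    (Continuous.intervalIntegrable (continuous_const.sub (continuous_const.mul continuous_id)) 0 1)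
  have hmono := intervalIntegral.integral_mono_on (by norm_num : (0:ℝ) ≤ 1) hlin hint hc
  have hlin2 : IntervalIntegrable (fun t : ℝ => β * ‖u‖ ^ 2 * t) MeasureTheory.volume 0 1 := by
    have hco : Continuous fun t : ℝ => β * ‖u‖ ^ 2 * t := continuous_const.mul continuous_id
    exact hco.intervalIntegrable 0 1
  have hval : (∫ t in (0:ℝ)..1, ((inner ℝ (gradient f x) u : ℝ) - β * ‖u‖ ^ 2 * t))
      = (inner ℝ (gradient f x) u : ℝ) - β * ‖u‖ ^ 2 / 2 := by
    rw [intervalIntegral.integral_sub (intervalIntegrable_const)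
      hlin2,
      intervalIntegral.integral_const_mul, integral_id]
    simp; ring
  rw [hval] at hmono
  nlinarith [heq, hmono]



/-- NPG regret lemma for two-player zero-sum Markov games. -/
theorem stmt11 {S A : Type*} [Fintype S] [Fintype A] [Nonempty S] [Nonempty A] {dp : ℕ}
    (γ β η W : ℝ) (hγ : γ ∈ Set.Ico (0 : ℝ) 1) (hβ : 0 ≤ β) (hη : 0 < η) (hW : 0 ≤ W)
    (π1 : S → A → ℝ) (hπ1 : ∀ s, (∀ a, 0 ≤ π1 s a) ∧ ∑ a, π1 s a = 1)
    (π : EuclideanSpace ℝ (Fin dp) → S → A → ℝ)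
    (hπpos : ∀ θ s b, 0 < π θ s b) (hπsum : ∀ θ s, ∑ b, π θ s b = 1)
    (hdiff : ∀ s b, Differentiable ℝ fun θ => Real.log (π θ s b))
    (hsmooth : ∀ s b, LipschitzWith (Real.toNNReal β)
      fun θ => gradient (fun θ' => Real.log (π θ' s b)) θ)
    (T : ℕ) (hT : 0 < T)
    (θ : ℕ → EuclideanSpace ℝ (Fin dp)) (w : ℕ → EuclideanSpace ℝ (Fin dp))
    (hθ0 : θ 0 = 0) (hupd : ∀ t, θ (t + 1) = θ t - η • w t)
    (hwB : ∀ t, ‖w t‖ ≤ W)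
    (hunif : ∀ s b, π (θ 0) s b = (Fintype.card A : ℝ)⁻¹)
    (πstar : S → A → ℝ) (hπstar : ∀ s, (∀ b, 0 ≤ πstar s b) ∧ ∑ b, πstar s b = 1)
    (dstar : S → ℝ) (hdstar0 : ∀ s, 0 ≤ dstar s) (hdstar1 : ∑ s, dstar s = 1)
    (Vval : ℕ → ℝ) (Vstar : ℝ)
    (Adv : ℕ → S → A → A → ℝ)
    (hperf : ∀ t, (1 - γ) * (Vval t - Vstar) =
      -∑ s, dstar s * ∑ a, π1 s a * ∑ b, πstar s b * Adv t s a b)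
    (err : ℕ → ℝ)
    (herr : ∀ t, err t = ∑ s, dstar s * ∑ a, π1 s a * ∑ b, πstar s b *
      (Adv t s a b - (inner ℝ (w t) (gradient (fun θ' => Real.log (π θ' s b)) (θ t)) : ℝ))) :
    (T : ℝ)⁻¹ * ∑ t ∈ range T, (Vval t - Vstar) ≤
      (1 - γ)⁻¹ * (Real.log (Fintype.card A) / (η * T) + η * β * W ^ 2 / 2
        - (T : ℝ)⁻¹ * ∑ t ∈ range T, err t) := by
  have hγ1 : 0 < 1 - γ := by have := hγ.2; linarith
  have hT' : (0 : ℝ) < T := by exact_mod_cast hT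
  set c : ℝ := η ^ 2 * β * W ^ 2 / 2 with hc
  set L : ℕ → ℝ := fun t => ∑ s, dstar s * ∑ b, πstar s b * Real.log (π (θ t) s b) with hL
  set inn : ℕ → S → A → ℝ :=
    fun t s b => (inner ℝ (w t) (gradient (fun θ' => Real.log (π θ' s b)) (θ t)) : ℝ) with hinn
  -- pointwise descent step
  have hpt : ∀ t s b, -η * inn t s b - c ≤
      Real.log (π (θ (t+1)) s b) - Real.log (π (θ t) s b) := by
    intro t s b
    have hdes := stmt11_descent β hβ (fun θ' => Real.log (π θ' s b)) (hdiff s b)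
      (hsmooth s b) (θ t) (-(η • w t))
    have hxu : θ t + -(η • w t) = θ (t + 1) := by rw [hupd t]; abel
    rw [hxu] at hdes
    have hinner : (inner ℝ (gradient (fun θ' => Real.log (π θ' s b)) (θ t)) (-(η • w t)) : ℝ)
        = -η * inn t s b := by
      rw [inner_neg_right, inner_smul_right, real_inner_comm]
      ring
    have hnorm : β / 2 * ‖-(η • w t)‖ ^ 2 ≤ c := by
      rw [norm_neg, norm_smul, Real.norm_eq_abs, abs_of_pos hη]
      have h1 : ‖w t‖ ^ 2 ≤ W ^ 2 := by nlinarith [norm_nonneg (w t), hwB t]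
      rw [hc, mul_pow]
      nlinarith [mul_nonneg hβ (sq_nonneg η), h1]
    rw [hinner] at hdes
    linarith
  -- per-step aggregated inequality
  have hstep : ∀ t, η * (1 - γ) * (Vval t - Vstar) + η * err t - c ≤ L (t+1) - L t := by
    intro t
    -- identity for err
    have herr2 : err t = (∑ s, dstar s * ∑ a, π1 s a * ∑ b, πstar s b * Adv t s a b)
        - ∑ s, dstar s * ∑ b, πstar s b * inn t s b := by
      rw [herr t, ← Finset.sum_sub_distrib]
      refine Finset.sum_congr rfl fun s _ => ?_
      rw [← mul_sub]
      congr 1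
      have h1 : ∀ a, ∑ b, πstar s b * (Adv t s a b - inn t s b)
          = (∑ b, πstar s b * Adv t s a b) - ∑ b, πstar s b * inn t s b := by
        intro a
        simp only [mul_sub, Finset.sum_sub_distrib]
      calc ∑ a, π1 s a * ∑ b, πstar s b * (Adv t s a b - inn t s b)
          = ∑ a, (π1 s a * ∑ b, πstar s b * Adv t s a b
              - π1 s a * ∑ b, πstar s b * inn t s b) := by
            refine Finset.sum_congr rfl fun a _ => ?_
            rw [h1 a, mul_sub]
        _ = (∑ a, π1 s a * ∑ b, πstar s b * Adv t s a b)
              - (∑ a, π1 s a) * ∑ b, πstar s b * inn t s b := by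
            rw [Finset.sum_sub_distrib, Finset.sum_mul]
        _ = _ := by rw [(hπ1 s).2, one_mul]
    have hAdv : (∑ s, dstar s * ∑ a, π1 s a * ∑ b, πstar s b * Adv t s a b)
        = -((1 - γ) * (Vval t - Vstar)) := by
      have := hperf t; linarith
    have hIt : ∑ s, dstar s * ∑ b, πstar s b * inn t s b
        = -((1 - γ) * (Vval t - Vstar)) - err t := by
      rw [herr2, hAdv]; ring
    -- lower bound L(t+1) - L t
    have hdiffL : L (t+1) - L t = ∑ s, dstar s *
        ∑ b, πstar s b * (Real.log (π (θ (t+1)) s b) - Real.log (π (θ t) s b)) := by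
      simp only [hL, mul_sub, Finset.sum_sub_distrib]
    have hbound : ∑ s, dstar s * ∑ b, πstar s b * (-η * inn t s b - c)
        ≤ ∑ s, dstar s *
          ∑ b, πstar s b * (Real.log (π (θ (t+1)) s b) - Real.log (π (θ t) s b)) := by
      refine Finset.sum_le_sum fun s _ => ?_
      refine mul_le_mul_of_nonneg_left ?_ (hdstar0 s)
      refine Finset.sum_le_sum fun b _ => ?_
      exact mul_le_mul_of_nonneg_left (hpt t s b) ((hπstar s).1 b)
    have hval : ∑ s, dstar s * ∑ b, πstar s b * (-η * inn t s b - c)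
        = -η * (∑ s, dstar s * ∑ b, πstar s b * inn t s b) - c := by
      have h1 : ∀ s, ∑ b, πstar s b * (-η * inn t s b - c)
          = -η * (∑ b, πstar s b * inn t s b) - c := by
        intro s
        calc ∑ b, πstar s b * (-η * inn t s b - c)
            = ∑ b, (-η * (πstar s b * inn t s b) - c * πstar s b) := by
              refine Finset.sum_congr rfl fun b _ => ?_; ring
          _ = -η * (∑ b, πstar s b * inn t s b) - c * ∑ b, πstar s b := by
              rw [Finset.sum_sub_distrib, ← Finset.mul_sum, ← Finset.mul_sum]
          _ = _ := by rw [(hπstar s).2, mul_one]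
      calc ∑ s, dstar s * ∑ b, πstar s b * (-η * inn t s b - c)
          = ∑ s, (-η * (dstar s * ∑ b, πstar s b * inn t s b) - c * dstar s) := by
            refine Finset.sum_congr rfl fun s _ => ?_; rw [h1 s]; ring
        _ = -η * (∑ s, dstar s * ∑ b, πstar s b * inn t s b) - c * ∑ s, dstar s := by
            rw [Finset.sum_sub_distrib, ← Finset.mul_sum, ← Finset.mul_sum]
        _ = _ := by rw [hdstar1, mul_one]
    rw [hdiffL]
    calc η * (1 - γ) * (Vval t - Vstar) + η * err t - c
        = -η * (-((1 - γ) * (Vval t - Vstar)) - err t) - c := by ring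
      _ = ∑ s, dstar s * ∑ b, πstar s b * (-η * inn t s b - c) := by rw [hval, hIt]
      _ ≤ _ := hbound
  -- telescoping
  have htel : ∑ t ∈ range T, (L (t+1) - L t) = L T - L 0 := Finset.sum_range_sub L T
  have hsumL : η * (1 - γ) * (∑ t ∈ range T, (Vval t - Vstar))
      + η * (∑ t ∈ range T, err t) - T * c ≤ L T - L 0 := by
    rw [← htel]
    calc η * (1 - γ) * (∑ t ∈ range T, (Vval t - Vstar))
        + η * (∑ t ∈ range T, err t) - T * c
        = ∑ t ∈ range T, (η * (1 - γ) * (Vval t - Vstar) + η * err t - c) := by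
          simp only [Finset.sum_sub_distrib, Finset.sum_add_distrib, ← Finset.mul_sum,
            Finset.sum_const, Finset.card_range, nsmul_eq_mul]
      _ ≤ _ := Finset.sum_le_sum fun t _ => hstep t
  -- L 0 value
  have hL0 : L 0 = -Real.log (Fintype.card A) := by
    have h1 : ∀ s, ∑ b, πstar s b * Real.log (π (θ 0) s b) = -Real.log (Fintype.card A) := by
      intro s
      have : ∀ b, πstar s b * Real.log (π (θ 0) s b)
          = πstar s b * (-Real.log (Fintype.card A)) := by
        intro b; rw [hunif s b, Real.log_inv]
      rw [Finset.sum_congr rfl fun b _ => this b, ← Finset.sum_mul, (hπstar s).2, one_mul]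
    simp only [hL]
    rw [Finset.sum_congr rfl fun s _ => by rw [h1 s], ← Finset.sum_mul, hdstar1, one_mul]
  -- L T ≤ 0
  have hLT : L T ≤ 0 := by
    refine Finset.sum_nonpos fun s _ => mul_nonpos_of_nonneg_of_nonpos (hdstar0 s) ?_
    refine Finset.sum_nonpos fun b _ => mul_nonpos_of_nonneg_of_nonpos ((hπstar s).1 b) ?_
    refine Real.log_nonpos (hπpos _ s b).le ?_
    calc π (θ T) s b ≤ ∑ b', π (θ T) s b' :=
          Finset.single_le_sum (fun b' _ => (hπpos _ s b').le) (Finset.mem_univ b)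
      _ = 1 := hπsum _ s
  -- final algebra
  have hmain : η * (1 - γ) * (∑ t ∈ range T, (Vval t - Vstar))
      + η * (∑ t ∈ range T, err t) - T * c ≤ Real.log (Fintype.card A) := by
    rw [hL0] at hsumL; linarith
  rw [hc] at hmain
  have hRHS : (1 - γ)⁻¹ * (Real.log (Fintype.card A) / (η * T) + η * β * W ^ 2 / 2
      - (T : ℝ)⁻¹ * ∑ t ∈ range T, err t)
      = (η * (1 - γ) * T)⁻¹ * (Real.log (Fintype.card A)
        + T * (η ^ 2 * β * W ^ 2 / 2) - η * ∑ t ∈ range T, err t) := by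
    field_simp
  rw [hRHS]
  rw [inv_mul_eq_div, inv_mul_eq_div, div_le_div_iff₀ hT' (by positivity)]
  nlinarith [hmain, mul_pos hη hγ1, hT']
end

section
/- (Entropy-regularized performance improvement.) Fix π1 and τ > 0, and consider the entropy-regularized NPG update π2^{t+1}(b|s) ∝ (π2^t(b|s))^{1−ητ/(1−γ)} exp(−(η/(1−γ)) Σ_a π1(a|s) Q_τ^{π1,π2^t}(s,a,b)) with 0 < ητ/(1−γ) ≤ 1. Then for every initial state s_0: V_τ^{t}(s_0) = V_τ^{t+1}(s_0) + E_{s∼d^{t+1}_{s_0}} [ (1/η − τ/(1−γ)) KL(π2^{t+1}(·|s) ‖ π2^t(·|s)) + (1/η) KL(π2^t(·|s) ‖ π2^{t+1}(·|s)) ]. In particular, V_τ^{t+1}(s_0) ≤ V_τ^t(s_0), i.e. the regularized value of the min-player monotonically decreases. -/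
/-- entropy-regularized NPG performance improvement. -/
theorem stmt13 {S A : Type*} [Fintype S] [Fintype A] [DecidableEq S]
    [Nonempty S] [Nonempty A]
    (P : S → A → A → S → ℝ) (r : S → A → A → ℝ) (γ τ η : ℝ)
    (hγ : γ ∈ Set.Ico (0 : ℝ) 1) (hτ : 0 < τ) (hη : 0 < η)
    (hstep : η * τ / (1 - γ) ≤ 1)
    (hP0 : ∀ s a b s', 0 ≤ P s a b s') (hP1 : ∀ s a b, ∑ s', P s a b s' = 1)
    (π1 : S → A → ℝ) (hπ1 : ∀ s, (∀ a, 0 ≤ π1 s a) ∧ ∑ a, π1 s a = 1)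
    (π2t π2t1 : S → A → ℝ)
    (hπ2t : ∀ s, (∀ b, 0 < π2t s b) ∧ ∑ b, π2t s b = 1)
    (hπ2t1 : ∀ s, (∀ b, 0 < π2t1 s b) ∧ ∑ b, π2t1 s b = 1)
    (Vτ : (S → A → ℝ) → S → ℝ)
    (hVτ : ∀ π2 : S → A → ℝ, (∀ s, (∀ b, 0 < π2 s b) ∧ ∑ b, π2 s b = 1) → ∀ s,
      Vτ π2 s = ∑ a, π1 s a * ∑ b, π2 s b *
        (r s a b + τ * Real.log (π2 s b) + γ * ∑ s', P s a b s' * Vτ π2 s'))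
    (Qτ : (S → A → ℝ) → S → A → A → ℝ)
    (hQτ : ∀ π2 s a b, Qτ π2 s a b = r s a b + γ * ∑ s', P s a b s' * Vτ π2 s')
    (Z : S → ℝ) (hZ : ∀ s, 0 < Z s)
    (hupd : ∀ s b, π2t1 s b =
      π2t s b ^ (1 - η * τ / (1 - γ)) *
        Real.exp (-(η / (1 - γ)) * ∑ a, π1 s a * Qτ π2t s a b) / Z s)
    (d : S → S → ℝ)
    (hd : ∀ s0 s', d s0 s' = (1 - γ) * (if s' = s0 then 1 else 0)
      + γ * ∑ s, d s0 s * ∑ a, π1 s a * ∑ b, π2t1 s b * P s a b s')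
    (KL : (A → ℝ) → (A → ℝ) → ℝ)
    (hKL : ∀ p q, KL p q = ∑ b, p b * Real.log (p b / q b)) :
    (∀ s0, Vτ π2t s0 = Vτ π2t1 s0 + ∑ s, d s0 s *
      ((1 / η - τ / (1 - γ)) * KL (π2t1 s) (π2t s) + (1 / η) * KL (π2t s) (π2t1 s))) ∧
    ∀ s0, Vτ π2t1 s0 ≤ Vτ π2t s0 := by
  obtain ⟨hγ0, hγ1⟩ := hγ
  have h1γ : (0:ℝ) < 1 - γ := by linarith
  set α : ℝ := η * τ / (1 - γ) with hα_def
  set β : ℝ := (1 - γ) / η with hβ_def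
  have hβα : β * α = τ := by rw [hα_def, hβ_def]; field_simp
  have hβpos : 0 < β := div_pos h1γ hη
  have hαle : α ≤ 1 := hstep
  set K : S → S → ℝ := fun s s' => ∑ a, π1 s a * ∑ b, π2t1 s b * P s a b s' with hK_def
  have hK0 : ∀ s s', 0 ≤ K s s' := by
    intro s s'
    apply Finset.sum_nonneg; intro a _
    apply mul_nonneg ((hπ1 s).1 a)
    apply Finset.sum_nonneg; intro b _
    exact mul_nonneg (le_of_lt ((hπ2t1 s).1 b)) (hP0 s a b s')
  have hK1 : ∀ s, ∑ s', K s s' = 1 := by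
    intro s
    have : ∑ s', K s s' = ∑ a, π1 s a * ∑ b, π2t1 s b * ∑ s', P s a b s' := by
      rw [Finset.sum_comm]
      refine Finset.sum_congr rfl fun a _ => ?_
      rw [← Finset.mul_sum]
      congr 1
      rw [Finset.sum_comm]
      refine Finset.sum_congr rfl fun b _ => ?_
      rw [← Finset.mul_sum]
    rw [this]
    simp only [hP1, mul_one]
    rw [show ∀ s, (∑ b, π2t1 s b) = 1 from fun s => (hπ2t1 s).2]
    simp [(hπ1 _).2]
  have hd' : ∀ s0 s', d s0 s' = (1 - γ) * (if s' = s0 then 1 else 0)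
      + γ * ∑ s, d s0 s * K s s' := hd
  -- nonnegativity of d
  have hd0 : ∀ s0 s, 0 ≤ d s0 s := by
    intro s0
    set N : ℝ := ∑ s, max 0 (-(d s0 s)) with hN_def
    have hterm : ∀ s', max 0 (-(d s0 s')) ≤ γ * ∑ s, max 0 (-(d s0 s)) * K s s' := by
      intro s'
      have hrhs : 0 ≤ γ * ∑ s, max 0 (-(d s0 s)) * K s s' := by
        apply mul_nonneg hγ0
        apply Finset.sum_nonneg; intro s _
        exact mul_nonneg (le_max_left _ _) (hK0 s s')
      apply max_le hrhs
      have h1 : -(d s0 s') ≤ γ * ∑ s, (-(d s0 s)) * K s s' := by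
        rw [hd' s0 s']
        have : (0:ℝ) ≤ (1 - γ) * (if s' = s0 then 1 else 0) := by positivity
        have h2 : γ * ∑ s, (-(d s0 s)) * K s s' = -(γ * ∑ s, d s0 s * K s s') := by
          simp only [neg_mul, Finset.sum_neg_distrib, mul_neg]
        rw [h2]
        linarith
      calc -(d s0 s') ≤ γ * ∑ s, (-(d s0 s)) * K s s' := h1
        _ ≤ γ * ∑ s, max 0 (-(d s0 s)) * K s s' := by
            apply mul_le_mul_of_nonneg_left _ hγ0
            apply Finset.sum_le_sum; intro s _
            exact mul_le_mul_of_nonneg_right (le_max_right _ _) (hK0 s s')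
    have hNle : N ≤ γ * N := by
      calc N ≤ ∑ s', γ * ∑ s, max 0 (-(d s0 s)) * K s s' :=
            Finset.sum_le_sum fun s' _ => hterm s'
        _ = γ * ∑ s, max 0 (-(d s0 s)) * ∑ s', K s s' := by
            rw [← Finset.mul_sum, Finset.sum_comm]
            congr 1
            refine Finset.sum_congr rfl fun s _ => ?_
            rw [← Finset.mul_sum]
        _ = γ * N := by simp only [hK1, mul_one]; rfl
    have hN0 : 0 ≤ N := Finset.sum_nonneg fun s _ => le_max_left _ _
    have hNzero : N = 0 := by nlinarith
    intro s
    have hz : max 0 (-(d s0 s)) = 0 :=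
      (Finset.sum_eq_zero_iff_of_nonneg (fun s _ => le_max_left 0 (-(d s0 s)))).1
        hNzero s (Finset.mem_univ s)
    have : -(d s0 s) ≤ 0 := by
      by_contra h
      push_neg at h
      rw [max_eq_right (le_of_lt h)] at hz
      linarith
    linarith
    -- swap lemma
  have hswap : ∀ (s : S) (p : A → ℝ) (X : A → A → ℝ),
      ∑ a, π1 s a * ∑ b, p b * X a b = ∑ b, p b * ∑ a, π1 s a * X a b := by
    intro s p X
    simp_rw [Finset.mul_sum]
    rw [Finset.sum_comm]
    exact Finset.sum_congr rfl fun b _ => Finset.sum_congr rfl fun a _ => by ring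
  have hVt_eq : ∀ s, Vτ π2t s
      = ∑ b, π2t s b * ((∑ a, π1 s a * Qτ π2t s a b) + τ * Real.log (π2t s b)) := by
    intro s
    rw [hVτ π2t hπ2t s, hswap]
    refine Finset.sum_congr rfl fun b _ => ?_
    congr 1
    have e : ∀ a : A, π1 s a * (r s a b + τ * Real.log (π2t s b) + γ * ∑ s', P s a b s' * Vτ π2t s')
        = π1 s a * Qτ π2t s a b + (τ * Real.log (π2t s b)) * π1 s a := by
      intro a; rw [hQτ]; ring
    rw [Finset.sum_congr rfl fun a _ => e a, Finset.sum_add_distrib, ← Finset.mul_sum,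
      (hπ1 s).2, mul_one]
  have hKf : ∀ (s : S) (f : S → ℝ),
      ∑ a, π1 s a * ∑ b, π2t1 s b * ∑ s', P s a b s' * f s' = ∑ s', K s s' * f s' := by
    intro s f
    have h1 : ∀ a, ∑ b, π2t1 s b * ∑ s', P s a b s' * f s'
        = ∑ s', (∑ b, π2t1 s b * P s a b s') * f s' := by
      intro a
      simp_rw [Finset.mul_sum, Finset.sum_mul]
      rw [Finset.sum_comm]
      exact Finset.sum_congr rfl fun s' _ => Finset.sum_congr rfl fun b _ => by ring
    simp_rw [h1, Finset.mul_sum]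
    rw [Finset.sum_comm]
    refine Finset.sum_congr rfl fun s' _ => ?_
    simp only [hK_def]
    rw [Finset.sum_mul]
    exact Finset.sum_congr rfl fun a _ => by ring
  have hVt1_eq : ∀ s, Vτ π2t1 s
      = (∑ b, π2t1 s b * ((∑ a, π1 s a * Qτ π2t s a b) + τ * Real.log (π2t1 s b)))
        + γ * ∑ s', K s s' * (Vτ π2t1 s' - Vτ π2t s') := by
    intro s
    rw [hVτ π2t1 hπ2t1 s]
    have hsplit : ∀ (a b : A), ∑ s', P s a b s' * Vτ π2t1 s'
        = (∑ s', P s a b s' * Vτ π2t s') + ∑ s', P s a b s' * (Vτ π2t1 s' - Vτ π2t s') := by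
      intro a b
      rw [← Finset.sum_add_distrib]
      exact Finset.sum_congr rfl fun s' _ => by ring
    have e : ∀ (a b : A),
        π2t1 s b * (r s a b + τ * Real.log (π2t1 s b) + γ * ∑ s', P s a b s' * Vτ π2t1 s')
        = π2t1 s b * (Qτ π2t s a b + τ * Real.log (π2t1 s b))
          + γ * (π2t1 s b * ∑ s', P s a b s' * (Vτ π2t1 s' - Vτ π2t s')) := by
      intro a b
      rw [hsplit a b, hQτ]
      ring
    rw [Finset.sum_congr rfl fun a _ => congrArg (fun z => π1 s a * z)
      (Finset.sum_congr rfl fun b _ => e a b)]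
    have esplit : ∀ a : A, π1 s a * ∑ b, (π2t1 s b * (Qτ π2t s a b + τ * Real.log (π2t1 s b))
          + γ * (π2t1 s b * ∑ s', P s a b s' * (Vτ π2t1 s' - Vτ π2t s')))
        = π1 s a * ∑ b, π2t1 s b * (Qτ π2t s a b + τ * Real.log (π2t1 s b))
          + γ * (π1 s a * ∑ b, π2t1 s b * ∑ s', P s a b s' * (Vτ π2t1 s' - Vτ π2t s')) := by
      intro a
      rw [Finset.sum_add_distrib, ← Finset.mul_sum]
      ring
    rw [Finset.sum_congr rfl fun a _ => esplit a, Finset.sum_add_distrib, ← Finset.mul_sum,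
      hKf s (fun s' => Vτ π2t1 s' - Vτ π2t s'), hswap]
    congr 1
    refine Finset.sum_congr rfl fun b _ => ?_
    congr 1
    have e2 : ∀ a : A, π1 s a * (Qτ π2t s a b + τ * Real.log (π2t1 s b))
        = π1 s a * Qτ π2t s a b + (τ * Real.log (π2t1 s b)) * π1 s a := fun a => by ring
    rw [Finset.sum_congr rfl fun a _ => e2 a, Finset.sum_add_distrib, ← Finset.mul_sum,
      (hπ1 s).2, mul_one]
  -- log of the update rule
  have hlog : ∀ s b, Real.log (π2t1 s b)
      = (1 - α) * Real.log (π2t s b) - (η / (1 - γ)) * (∑ a, π1 s a * Qτ π2t s a b)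
        - Real.log (Z s) := by
    intro s b
    rw [hupd s b, Real.log_div
      (mul_ne_zero (ne_of_gt (Real.rpow_pos_of_pos ((hπ2t s).1 b) _)) (Real.exp_ne_zero _))
      (ne_of_gt (hZ s)),
      Real.log_mul (ne_of_gt (Real.rpow_pos_of_pos ((hπ2t s).1 b) _)) (Real.exp_ne_zero _),
      Real.log_rpow ((hπ2t s).1 b), Real.log_exp]
    ring
  have hβη : β * (η / (1 - γ)) = 1 := by
    rw [hβ_def]; field_simp
  have hQbar : ∀ s b, (∑ a, π1 s a * Qτ π2t s a b)
      = β * (1 - α) * Real.log (π2t s b) - β * Real.log (π2t1 s b) - β * Real.log (Z s) := by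
    intro s b
    linear_combination β * (hlog s b) - (∑ a, π1 s a * Qτ π2t s a b) * hβη
  have hKLd : ∀ (p q : S → A → ℝ), (∀ s, (∀ b, 0 < p s b) ∧ ∑ b, p s b = 1) →
      (∀ s, (∀ b, 0 < q s b) ∧ ∑ b, q s b = 1) → ∀ s, KL (p s) (q s)
      = (∑ b, p s b * Real.log (p s b)) - ∑ b, p s b * Real.log (q s b) := by
    intro p q hp hq s
    rw [hKL, ← Finset.sum_sub_distrib]
    refine Finset.sum_congr rfl fun b _ => ?_
    rw [Real.log_div (ne_of_gt ((hp s).1 b)) (ne_of_gt ((hq s).1 b))]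
    ring
  set G : S → ℝ := fun s => (1 / η - τ / (1 - γ)) * KL (π2t1 s) (π2t s)
      + (1 / η) * KL (π2t s) (π2t1 s) with hG_def
  have hdelta : ∀ s,
      (∑ b, π2t1 s b * ((∑ a, π1 s a * Qτ π2t s a b) + τ * Real.log (π2t1 s b))) - Vτ π2t s
      = -((1 - γ) * G s) := by
    intro s
    have e1 : ∑ b, π2t1 s b * ((∑ a, π1 s a * Qτ π2t s a b) + τ * Real.log (π2t1 s b))
        = β * (1 - α) * (∑ b, π2t1 s b * Real.log (π2t s b))
          + (τ - β) * (∑ b, π2t1 s b * Real.log (π2t1 s b)) - β * Real.log (Z s) := by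
      have e : ∀ b, π2t1 s b * ((∑ a, π1 s a * Qτ π2t s a b) + τ * Real.log (π2t1 s b))
          = β * (1 - α) * (π2t1 s b * Real.log (π2t s b))
            + (τ - β) * (π2t1 s b * Real.log (π2t1 s b))
            + (-(β * Real.log (Z s))) * π2t1 s b := by
        intro b; rw [hQbar s b]; ring
      rw [Finset.sum_congr rfl fun b _ => e b, Finset.sum_add_distrib, Finset.sum_add_distrib,
        ← Finset.mul_sum, ← Finset.mul_sum, ← Finset.mul_sum, (hπ2t1 s).2]
      ring
    have e2 : ∑ b, π2t s b * ((∑ a, π1 s a * Qτ π2t s a b) + τ * Real.log (π2t s b))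
        = (β * (1 - α) + τ) * (∑ b, π2t s b * Real.log (π2t s b))
          - β * (∑ b, π2t s b * Real.log (π2t1 s b)) - β * Real.log (Z s) := by
      have e : ∀ b, π2t s b * ((∑ a, π1 s a * Qτ π2t s a b) + τ * Real.log (π2t s b))
          = (β * (1 - α) + τ) * (π2t s b * Real.log (π2t s b))
            + (-β) * (π2t s b * Real.log (π2t1 s b))
            + (-(β * Real.log (Z s))) * π2t s b := by
        intro b; rw [hQbar s b]; ring
      rw [Finset.sum_congr rfl fun b _ => e b, Finset.sum_add_distrib, Finset.sum_add_distrib,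
        ← Finset.mul_sum, ← Finset.mul_sum, ← Finset.mul_sum, (hπ2t s).2]
      ring
    rw [hVt_eq s, e1, e2]
    simp only [hG_def]
    rw [hKLd π2t1 π2t hπ2t1 hπ2t s, hKLd π2t π2t1 hπ2t hπ2t1 s]
    simp only [hα_def, hβ_def]
    field_simp
    ring
  have hf : ∀ s, Vτ π2t1 s - Vτ π2t s
      = -((1 - γ) * G s) + γ * ∑ s', K s s' * (Vτ π2t1 s' - Vτ π2t s') := by
    intro s
    rw [hVt1_eq s]
    have := hdelta s
    linarith
  have hswap2 : ∀ (s0 : S) (f : S → ℝ),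
      ∑ s, d s0 s * (γ * ∑ s', K s s' * f s') = ∑ s', (γ * ∑ s, d s0 s * K s s') * f s' := by
    intro s0 f
    simp_rw [Finset.mul_sum, Finset.sum_mul]
    rw [Finset.sum_comm]
    exact Finset.sum_congr rfl fun s' _ => Finset.sum_congr rfl fun s _ => by ring
  have main : ∀ s0, (1 - γ) * (Vτ π2t1 s0 - Vτ π2t s0) = ∑ s, d s0 s * (-((1 - γ) * G s)) := by
    intro s0
    have h1 : ∑ s, d s0 s * (-((1 - γ) * G s))
        = ∑ s, (d s0 s * (Vτ π2t1 s - Vτ π2t s)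
            - d s0 s * (γ * ∑ s', K s s' * (Vτ π2t1 s' - Vτ π2t s'))) := by
      refine Finset.sum_congr rfl fun s _ => ?_
      have := hf s
      have h2 : -((1 - γ) * G s) = (Vτ π2t1 s - Vτ π2t s)
          - γ * ∑ s', K s s' * (Vτ π2t1 s' - Vτ π2t s') := by linarith
      rw [h2]; ring
    rw [h1, Finset.sum_sub_distrib, hswap2 s0 (fun s' => Vτ π2t1 s' - Vτ π2t s')]
    have h3 : ∀ s' : S, γ * ∑ s, d s0 s * K s s'
        = d s0 s' - (1 - γ) * (if s' = s0 then 1 else 0) := by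
      intro s'
      have := hd' s0 s'
      linarith
    simp only [h3]
    rw [show ∑ s', (d s0 s' - (1 - γ) * (if s' = s0 then 1 else 0)) * (Vτ π2t1 s' - Vτ π2t s')
        = ∑ s', (d s0 s' * (Vτ π2t1 s' - Vτ π2t s')
            - (1 - γ) * ((if s' = s0 then 1 else 0) * (Vτ π2t1 s' - Vτ π2t s'))) from
      Finset.sum_congr rfl fun s' _ => by ring]
    rw [Finset.sum_sub_distrib, ← Finset.mul_sum]
    have h4 : ∑ s', (if s' = s0 then (1:ℝ) else 0) * (Vτ π2t1 s' - Vτ π2t s')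
        = Vτ π2t1 s0 - Vτ π2t s0 := by
      simp [ite_mul]
    rw [h4]
    ring
  have part1 : ∀ s0, Vτ π2t s0 = Vτ π2t1 s0 + ∑ s, d s0 s * G s := by
    intro s0
    have h := main s0
    have h5 : ∑ s, d s0 s * (-((1 - γ) * G s)) = -((1 - γ) * ∑ s, d s0 s * G s) := by
      rw [Finset.mul_sum, ← Finset.sum_neg_distrib]
      exact Finset.sum_congr rfl fun s _ => by ring
    rw [h5] at h
    have h7 : (1 - γ) * (Vτ π2t1 s0 - Vτ π2t s0) = (1 - γ) * (-(∑ s, d s0 s * G s)) := by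
      linarith
    have h6 := mul_left_cancel₀ (ne_of_gt h1γ) h7
    linarith
  simp only [hG_def] at part1
  refine ⟨part1, ?_⟩
  -- nonnegativity of KL
  have hKLnn : ∀ (p q : A → ℝ), (∀ b, 0 < p b) → (∀ b, 0 < q b) →
      (∑ b, p b = 1) → (∑ b, q b = 1) → 0 ≤ KL p q := by
    intro p q hp hq hps hqs
    rw [hKL]
    have h1 : ∑ b, p b * Real.log (q b / p b) ≤ 0 := by
      calc ∑ b, p b * Real.log (q b / p b) ≤ ∑ b, (q b - p b) := by
            apply Finset.sum_le_sum; intro b _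
            have hlog2 := Real.log_le_sub_one_of_pos (div_pos (hq b) (hp b))
            have h6 := mul_le_mul_of_nonneg_left hlog2 (le_of_lt (hp b))
            calc p b * Real.log (q b / p b) ≤ p b * (q b / p b - 1) := h6
              _ = q b - p b := by
                  have hpne : p b ≠ 0 := ne_of_gt (hp b)
                  field_simp
        _ = 0 := by rw [Finset.sum_sub_distrib, hps, hqs]; ring
    have h2 : ∑ b, p b * Real.log (p b / q b) = -∑ b, p b * Real.log (q b / p b) := by
      rw [← Finset.sum_neg_distrib]
      refine Finset.sum_congr rfl fun b _ => ?_
      rw [Real.log_div (ne_of_gt (hp b)) (ne_of_gt (hq b)),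
        Real.log_div (ne_of_gt (hq b)) (ne_of_gt (hp b))]
      ring
    linarith
  have hc1 : 0 ≤ 1 / η - τ / (1 - γ) := by
    have h := hstep
    rw [hα_def, div_le_one h1γ] at h
    rw [sub_nonneg, div_le_div_iff₀ h1γ hη]
    nlinarith
  have hGnn : ∀ s, 0 ≤ G s := by
    intro s
    simp only [hG_def]
    have k1 := hKLnn (π2t1 s) (π2t s) (hπ2t1 s).1 (hπ2t s).1 (hπ2t1 s).2 (hπ2t s).2
    have k2 := hKLnn (π2t s) (π2t1 s) (hπ2t s).1 (hπ2t1 s).1 (hπ2t s).2 (hπ2t1 s).2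
    have : (0:ℝ) < 1 / η := by positivity
    nlinarith
  intro s0
  rw [part1 s0]
  have : 0 ≤ ∑ s, d s0 s * G s :=
    Finset.sum_nonneg fun s _ => mul_nonneg (hd0 s0 s) (hGnn s)
  linarith
end
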